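/- For positive integer m, reals b_1, b_2 > 0, natural number k, and x ≥ 0: ∫_0^x f_{m,b_2}(t) · e^{-b_1 t}(b_1 t)^k/k! dt = NB_{m,p}(k) · F_{m+k, b_1+b_2}(x), where p = b_2/(b_1+b_2), NB_{m,p}(k) = C(m-1+k, m-1)(1-p)^k p^m, and F_{m+k,b_1+b_2} is the Gamma(m+k, b_1+b_2) CDF. -/

import Mathlib

open MeasureTheory

/-- The Gamma(n, b) density `b^n t^{n-1} e^{-bt}/(n-1)!`. -/
noncomputable def gammaDensity (n : ℕ) (b t : ℝ) : ℝ :=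
  b ^ n * t ^ (n - 1) * Real.exp (-b * t) / ((n - 1).factorial : ℝ)

/-- The negative binomial probability mass function `NB_{m,p}(k)`. -/
noncomputable def negBinom (m : ℕ) (p : ℝ) (k : ℕ) : ℝ :=
  (Nat.choose (m - 1 + k) (m - 1) : ℝ) * (1 - p) ^ k * p ^ m

theorem gamma_poisson_integral (m : ℕ) (hm : 0 < m) (b₁ b₂ : ℝ)
    (hb₁ : 0 < b₁) (hb₂ : 0 < b₂) (k : ℕ) (x : ℝ) (hx : 0 ≤ x) :
    ∫ t in (0 : ℝ)..x,
        gammaDensity m b₂ t * (Real.exp (-(b₁ * t)) * (b₁ * t) ^ k / (k.factorial : ℝ)) =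
      negBinom m (b₂ / (b₁ + b₂)) k * ∫ t in (0 : ℝ)..x, gammaDensity (m + k) (b₁ + b₂) t := by
  have hsum : (0:ℝ) < b₁ + b₂ := by linarith
  have key : ∀ t : ℝ,
      gammaDensity m b₂ t * (Real.exp (-(b₁ * t)) * (b₁ * t) ^ k / (k.factorial : ℝ)) =
      negBinom m (b₂ / (b₁ + b₂)) k * gammaDensity (m + k) (b₁ + b₂) t := by
    intro t
    simp only [gammaDensity, negBinom]
    have h1 : 1 - b₂ / (b₁ + b₂) = b₁ / (b₁ + b₂) := by field_simp; ring
    rw [h1]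
    have hexp : Real.exp (-b₂ * t) * Real.exp (-(b₁ * t)) = Real.exp (-(b₁ + b₂) * t) := by
      rw [← Real.exp_add]; ring_nf
    have hm1 : m - 1 + k = m + k - 1 := by omega
    have hchoose : ((m - 1 + k).choose (m - 1) : ℝ) * (m - 1).factorial * k.factorial
        = ((m + k - 1).factorial : ℝ) := by
      rw [← hm1]
      have := Nat.choose_mul_factorial_mul_factorial (Nat.le_add_right (m - 1) k)
      rw [Nat.add_sub_cancel_left] at this
      exact_mod_cast congrArg (Nat.cast (R := ℝ)) this
    have htpow : t ^ (m - 1) * t ^ k = t ^ (m + k - 1) := by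
      rw [← pow_add, hm1]
    have hf0 : ((m - 1).factorial : ℝ) ≠ 0 := Nat.cast_ne_zero.2 (Nat.factorial_ne_zero _)
    have hfk : ((k).factorial : ℝ) ≠ 0 := Nat.cast_ne_zero.2 (Nat.factorial_ne_zero _)
    have hfmk : ((m + k - 1).factorial : ℝ) ≠ 0 := Nat.cast_ne_zero.2 (Nat.factorial_ne_zero _)
    rw [mul_pow]
    rw [div_pow, div_pow]
    field_simp
    rw [show (-(t * (b₁ + b₂))) = -(b₂ * t) + -(t * b₁) by ring, Real.exp_add,
      ← htpow, ← hchoose]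
    ring
  simp_rw [key]
  rw [intervalIntegral.integral_const_mul]
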